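/- (Corollary 1) For all positive integers m, n, p, and q, the identity \(\sum_{a=1}^{pm}\sum_{b=1}^{qn}\binom{pm+qm-a+b-1}{pm-a}\binom{pn+qn+a-b-1}{qn-b}=\frac{pqmn}{(p+q)(m+n)}\binom{pm+qm}{pm}\binom{pn+qn}{pn}\) holds (as an identity of rational numbers). -/

import Mathlib

open Finset

lemma gz_hockey (μ : ℕ) : ∀ n : ℕ,
    ∑ x ∈ Finset.range (n+1), Nat.choose (μ+x) x = Nat.choose (μ+1+n) n := by
  intro n
  induction n with
  | zero => simp
  | succ n ih =>
    rw [Finset.sum_range_succ, ih]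
    have h1 : μ+(n+1) = μ+1+n := by omega
    have h2 : μ+1+(n+1) = (μ+1+n)+1 := by omega
    rw [h1, h2, Nat.choose_succ_succ (μ+1+n) n]

lemma gz_S2 (μ e : ℕ) : ∀ (i w : ℕ),
    ∑ p ∈ Finset.HasAntidiagonal.antidiagonal i,
        Nat.choose (μ+p.1) p.1 * Nat.choose (w+e+2+p.2) (e+1)
    = (∑ p ∈ Finset.HasAntidiagonal.antidiagonal i,
        Nat.choose (μ+1+p.1) p.1 * Nat.choose (w+e+1+p.2) e)
      + Nat.choose (μ+1+i) i * Nat.choose (w+e+1) (e+1) := by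
  intro i
  induction i with
  | zero =>
    intro w
    simp only [Finset.Nat.antidiagonal_zero, Finset.sum_singleton, Nat.add_zero,
      Nat.choose_zero_right, Nat.choose_self, one_mul]
    have h2 : w+e+2 = (w+e+1)+1 := by omega
    rw [h2, Nat.choose_succ_succ (w+e+1) e]
  | succ i ih =>
    intro w
    rw [Finset.Nat.sum_antidiagonal_succ' (f := fun p =>
        Nat.choose (μ+p.1) p.1 * Nat.choose (w+e+2+p.2) (e+1)),
      Finset.Nat.sum_antidiagonal_succ' (f := fun p =>
        Nat.choose (μ+1+p.1) p.1 * Nat.choose (w+e+1+p.2) e)]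
    dsimp only
    have e1 : ∀ p ∈ Finset.HasAntidiagonal.antidiagonal i, (μ + p.1).choose p.1 * (w+e+2+(p.2+1)).choose (e+1)
        = (μ + p.1).choose p.1 * ((w+1)+e+2+p.2).choose (e+1) := by
      intro p _; rw [show w+e+2+(p.2+1) = (w+1)+e+2+p.2 from by omega]
    rw [Finset.sum_congr rfl e1, ih (w+1)]
    have e2 : ∀ p ∈ Finset.HasAntidiagonal.antidiagonal i, (μ+1+p.1).choose p.1 * (w+e+1+(p.2+1)).choose e
        = (μ+1+p.1).choose p.1 * ((w+1)+e+1+p.2).choose e := by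
      intro p _; rw [show w+e+1+(p.2+1) = (w+1)+e+1+p.2 from by omega]
    rw [Finset.sum_congr rfl e2]
    have hP1 : (μ+1+(i+1)).choose (i+1) = (μ+1+i).choose i + (μ+(i+1)).choose (i+1) := by
      rw [show μ+1+(i+1) = (μ+1+i)+1 from by omega, Nat.choose_succ_succ]
      congr 2
      omega
    have hP2 : ((w+1)+e+1).choose (e+1) = (w+e+1).choose e + (w+e+1).choose (e+1) := by
      rw [show (w+1)+e+1 = (w+e+1)+1 from by omega, Nat.choose_succ_succ]
    have hP3 : (w+e+2).choose (e+1) = (w+e+1).choose e + (w+e+1).choose (e+1) := by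
      rw [show w+e+2 = (w+e+1)+1 from by omega, Nat.choose_succ_succ]
    rw [hP1, hP2, hP3]
    ring

lemma gz_A : ∀ (e : ℕ), ∀ (μ i w : ℕ),
    ∑ p ∈ Finset.HasAntidiagonal.antidiagonal e, Nat.choose (μ+1+i+p.2) i * Nat.choose (w+p.1) p.1
    = ∑ p ∈ Finset.HasAntidiagonal.antidiagonal i, Nat.choose (μ+p.1) p.1 * Nat.choose (w+1+e+p.2) e := by
  intro e
  induction e with
  | zero =>
    intro μ i w
    simp only [Finset.Nat.antidiagonal_zero, Finset.sum_singleton, Nat.add_zero,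
      Nat.choose_zero_right, Nat.choose_self, mul_one]
    rw [Finset.Nat.sum_antidiagonal_eq_sum_range_succ_mk]
    simp only [Nat.choose_zero_right, mul_one]
    rw [gz_hockey μ i]
  | succ e ih =>
    intro μ i w
    rw [Finset.Nat.sum_antidiagonal_succ' (f := fun p =>
        Nat.choose (μ+1+i+p.2) i * Nat.choose (w+p.1) p.1)]
    dsimp only
    have e1 : ∀ p ∈ Finset.HasAntidiagonal.antidiagonal e, (μ+1+i+(p.2+1)).choose i * (w+p.1).choose p.1
        = ((μ+1)+1+i+p.2).choose i * (w+p.1).choose p.1 := by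
      intro p _; rw [show μ+1+i+(p.2+1) = (μ+1)+1+i+p.2 from by omega]
    rw [Finset.sum_congr rfl e1, ih (μ+1) i w]
    have e2 : ∀ p ∈ Finset.HasAntidiagonal.antidiagonal i, ((μ+1)+p.1).choose p.1 * (w+1+e+p.2).choose e
        = (μ+1+p.1).choose p.1 * (w+e+1+p.2).choose e := by
      intro p _
      rw [show (μ+1)+p.1 = μ+1+p.1 from rfl, show w+1+e+p.2 = w+e+1+p.2 from by omega]
    rw [Finset.sum_congr rfl e2]
    have e3 : ∀ p ∈ Finset.HasAntidiagonal.antidiagonal i, (μ+p.1).choose p.1 * (w+1+(e+1)+p.2).choose (e+1)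
        = (μ+p.1).choose p.1 * (w+e+2+p.2).choose (e+1) := by
      intro p _; rw [show w+1+(e+1)+p.2 = w+e+2+p.2 from by omega]
    rw [Finset.sum_congr rfl e3, gz_S2 μ e i w]
    rw [show μ+1+i+0 = μ+1+i from by omega, show w+(e+1) = w+e+1 from by omega]
    ring

lemma gz_sumsum (G : ℕ → ℕ) : ∀ M : ℕ,
    ∑ t ∈ Finset.range M, ∑ x ∈ Finset.range (t+1), G x
    = ∑ x ∈ Finset.range M, (M - x) * G x := by
  intro M
  induction M with
  | zero => simp
  | succ M ih =>
    rw [Finset.sum_range_succ, ih, Finset.sum_range_succ G,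
      Finset.sum_range_succ (fun x => (M+1-x) * G x)]
    rw [show M+1-M = 1 from by omega, one_mul, ← add_assoc]
    congr 1
    rw [← Finset.sum_add_distrib]
    apply Finset.sum_congr rfl
    intro x hx
    have hx' : x < M := Finset.mem_range.mp hx
    rw [show M+1-x = (M-x)+1 from by omega]
    ring

lemma gz_main (M N Mp Np : ℕ) (hM : 1 ≤ M) (hMp : 1 ≤ Mp) (hNp : 1 ≤ Np) :
    ∑ a ∈ Finset.Icc 1 M, ∑ b ∈ Finset.Icc 1 Np,
      (M + Mp - a + b - 1).choose (M - a) * (N + Np + a - b - 1).choose (Np - b)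
    = ∑ x ∈ Finset.range M,
        (M - x) * ((Mp-1+x).choose x * (M+N+Np-1-x).choose (Np-1)) := by
  have hinner : ∀ a, 1 ≤ a → a ≤ M →
      ∑ b ∈ Finset.Icc 1 Np,
        (M + Mp - a + b - 1).choose (M - a) * (N + Np + a - b - 1).choose (Np - b)
      = ∑ x ∈ Finset.range (M-a+1),
          (Mp-1+x).choose x * (M+N+Np-1-x).choose (Np-1) := by
    intro a ha1 ha2
    rw [← Finset.Ico_add_one_right_eq_Icc, Finset.sum_Ico_eq_sum_range]
    rw [show Np + 1 - 1 = (Np-1)+1 from by omega]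
    have step1 : ∀ k ∈ Finset.range ((Np-1)+1),
        (M + Mp - a + (1+k) - 1).choose (M - a) * (N + Np + a - (1+k) - 1).choose (Np - (1+k))
        = (fun k => ((Mp-1)+1+(M-a)+((Np-1)-((Np-1)+1-1-k))).choose (M-a)
            * ((N+a-1)+((Np-1)+1-1-k)).choose ((Np-1)+1-1-k)) k := by
      intro k hk
      have hk' : k ≤ Np-1 := by have := Finset.mem_range.mp hk; omega
      dsimp only
      rw [show M + Mp - a + (1+k) - 1 = (Mp-1)+1+(M-a)+((Np-1)-((Np-1)+1-1-k)) from by omega,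
        show N + Np + a - (1+k) - 1 = (N+a-1)+((Np-1)+1-1-k) from by omega,
        show Np - (1+k) = (Np-1)+1-1-k from by omega]
    rw [Finset.sum_congr rfl step1]
    rw [Finset.sum_range_reflect (fun k => ((Mp-1)+1+(M-a)+((Np-1)-k)).choose (M-a)
            * ((N+a-1)+k).choose k) ((Np-1)+1)]
    rw [← Finset.Nat.sum_antidiagonal_eq_sum_range_succ_mk
      (fun p => ((Mp-1)+1+(M-a)+p.2).choose (M-a) * ((N+a-1)+p.1).choose p.1)]
    rw [gz_A (Np-1) (Mp-1) (M-a) (N+a-1)]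
    rw [Finset.Nat.sum_antidiagonal_eq_sum_range_succ_mk]
    apply Finset.sum_congr rfl
    intro x hx
    have hx' : x ≤ M-a := by have := Finset.mem_range.mp hx; omega
    rw [show (Mp-1)+x = Mp-1+x from rfl,
      show (N+a-1)+1+(Np-1)+((M-a)-x) = M+N+Np-1-x from by omega]
  calc ∑ a ∈ Finset.Icc 1 M, ∑ b ∈ Finset.Icc 1 Np,
      (M + Mp - a + b - 1).choose (M - a) * (N + Np + a - b - 1).choose (Np - b)
      = ∑ a ∈ Finset.Icc 1 M, ∑ x ∈ Finset.range (M-a+1),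
          (Mp-1+x).choose x * (M+N+Np-1-x).choose (Np-1) := by
        apply Finset.sum_congr rfl
        intro a ha
        have := Finset.mem_Icc.mp ha
        exact hinner a this.1 this.2
    _ = ∑ k ∈ Finset.range M, ∑ x ∈ Finset.range (M-(1+k)+1),
          (Mp-1+x).choose x * (M+N+Np-1-x).choose (Np-1) := by
        rw [← Finset.Ico_add_one_right_eq_Icc, Finset.sum_Ico_eq_sum_range, show M + 1 - 1 = M from by omega]
    _ = ∑ k ∈ Finset.range M, ∑ x ∈ Finset.range ((M-1-k)+1),
          (Mp-1+x).choose x * (M+N+Np-1-x).choose (Np-1) := by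
        apply Finset.sum_congr rfl
        intro k hk
        have hk' : k < M := Finset.mem_range.mp hk
        rw [show M-(1+k)+1 = (M-1-k)+1 from by omega]
    _ = ∑ k ∈ Finset.range M, ∑ x ∈ Finset.range (k+1),
          (Mp-1+x).choose x * (M+N+Np-1-x).choose (Np-1) :=
        Finset.sum_range_reflect (fun t => ∑ x ∈ Finset.range (t+1),
          (Mp-1+x).choose x * (M+N+Np-1-x).choose (Np-1)) M
    _ = ∑ x ∈ Finset.range M,
        (M - x) * ((Mp-1+x).choose x * (M+N+Np-1-x).choose (Np-1)) :=
        gz_sumsum _ M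

lemma gz_F1 (Mp x : ℕ) (hMp : 1 ≤ Mp) :
    (Mp+x) * (Mp-1+x).choose x = (x+1) * (Mp+x).choose (x+1) := by
  have h := Nat.add_one_mul_choose_eq (Mp-1+x) x
  rw [show Mp-1+x+1 = Mp+x from by omega] at h
  rw [h]; ring

lemma gz_F2 (N Np y : ℕ) (hNp : 1 ≤ Np) :
    (N+Np+y) * (N+(Np-1)+y).choose (Np-1) = (N+y+1) * (N+Np+y).choose (Np-1) := by
  have h1 := Nat.add_one_mul_choose_eq (N+(Np-1)+y) (Np-1)
  rw [show N+(Np-1)+y+1 = N+Np+y from by omega, show (Np-1)+1 = Np from by omega] at h1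
  have h2 := Nat.choose_succ_right_eq (N+Np+y) (Np-1)
  rw [show (Np-1)+1 = Np from by omega,
    show (N+Np+y) - (Np-1) = N+y+1 from by omega] at h2
  calc (N+Np+y) * (N+(Np-1)+y).choose (Np-1) = (N+Np+y).choose Np * Np := h1
    _ = (N+Np+y).choose (Np-1) * (N+y+1) := h2
    _ = (N+y+1) * (N+Np+y).choose (Np-1) := by ring

lemma gz_F3 (M Mp : ℕ) (hMp : 1 ≤ Mp) :
    (M+Mp) * (Mp-1+M).choose M = Mp * (M+Mp).choose M := by
  have h := gz_F1 Mp M hMp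
  rw [show Mp+M = M+Mp from by omega] at h
  have h2 := Nat.choose_succ_right_eq (M+Mp) M
  rw [show (M+Mp) - M = Mp from by omega] at h2
  calc (M+Mp) * (Mp-1+M).choose M = (M+1) * (M+Mp).choose (M+1) := h
    _ = (M+Mp).choose (M+1) * (M+1) := by ring
    _ = (M+Mp).choose M * Mp := h2
    _ = Mp * (M+Mp).choose M := by ring

lemma gz_F4 (N Np : ℕ) (hN : 1 ≤ N) (hNp : 1 ≤ Np) :
    (N+Np) * (N+Np-1).choose (Np-1) = Np * (N+Np).choose N := by
  have hsymm : (N+Np-1).choose (Np-1) = (N+Np-1).choose N := by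
    rw [show Np-1 = (N+Np-1) - N from by omega]
    exact Nat.choose_symm (by omega)
  have h1 := Nat.add_one_mul_choose_eq (N+Np-1) N
  rw [show N+Np-1+1 = N+Np from by omega] at h1
  have h2 := Nat.choose_succ_right_eq (N+Np) N
  rw [show (N+Np) - N = Np from by omega] at h2
  calc (N+Np) * (N+Np-1).choose (Np-1) = (N+Np) * (N+Np-1).choose N := by rw [hsymm]
    _ = (N+Np).choose (N+1) * (N+1) := h1
    _ = (N+Np).choose N * Np := h2
    _ = Np * (N+Np).choose N := by ring


lemma gz_q (M N Mp Np : ℕ) (hM : 1 ≤ M) (hN : 1 ≤ N) (hMp : 1 ≤ Mp) (hNp : 1 ≤ Np)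
    (hc : Mp * N = M * Np) :
    ((∑ x ∈ Finset.range M, (M-x) * ((Mp-1+x).choose x * (M+N+Np-1-x).choose (Np-1)) : ℕ) : ℚ)
    = (M * Mp * Np : ℚ) / (((Mp:ℚ)+Np) * ((M:ℚ)+Mp))
        * ((M+Mp).choose M : ℚ) * ((N+Np).choose N : ℚ) := by
  have hD : ((Mp:ℚ)+Np) ≠ 0 := by
    have : (0:ℚ) < (Mp:ℚ)+Np := by
      have h1 : (1:ℚ) ≤ (Mp:ℚ) := by exact_mod_cast hMp
      have h2 : (0:ℚ) ≤ (Np:ℚ) := by positivity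
      linarith
    linarith
  set s : ℕ → ℚ := fun t =>
    ((t * (M+N+Np-t) * ((Mp-1+t).choose t) * ((M+N+Np-1-t).choose (Np-1)) : ℕ) : ℚ)
      / ((Mp:ℚ)+Np) with hs
  have key : ∀ x ∈ Finset.range M,
      (((M-x) * ((Mp-1+x).choose x * (M+N+Np-1-x).choose (Np-1)) : ℕ) : ℚ) = s (x+1) - s x := by
    intro x hx
    have hxM : x < M := Finset.mem_range.mp hx
    obtain ⟨y, hy⟩ : ∃ y, M = x+y+1 := ⟨M-x-1, by omega⟩
    subst hy
    simp only [hs]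
    rw [show x+y+1-x = y+1 from by omega,
      show x+y+1+N+Np-1-x = N+Np+y from by omega,
      show x+y+1+N+Np-(x+1) = N+Np+y from by omega,
      show Mp-1+(x+1) = Mp+x from by omega,
      show x+y+1+N+Np-1-(x+1) = N+(Np-1)+y from by omega,
      show x+y+1+N+Np-x = N+Np+y+1 from by omega]
    have f1 : ((Mp:ℚ)+x) * ((Mp-1+x).choose x : ℚ) = ((x:ℚ)+1) * ((Mp+x).choose (x+1) : ℚ) := by
      exact_mod_cast congrArg (Nat.cast : ℕ → ℚ) (gz_F1 Mp x hMp)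
    have f2 : ((N:ℚ)+Np+y) * ((N+(Np-1)+y).choose (Np-1) : ℚ)
        = ((N:ℚ)+y+1) * ((N+Np+y).choose (Np-1) : ℚ) := by
      exact_mod_cast congrArg (Nat.cast : ℕ → ℚ) (gz_F2 N Np y hNp)
    have hcq : (Mp:ℚ) * N = ((x:ℚ)+y+1) * Np := by exact_mod_cast hc
    push_cast
    rw [div_sub_div_same, eq_div_iff hD]
    linear_combination (((N:ℚ)+Np+y) * ((N+(Np-1)+y).choose (Np-1) : ℚ)) * f1
      - (((Mp:ℚ)+x) * ((Mp-1+x).choose x : ℚ)) * f2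
      - (((Mp-1+x).choose x : ℚ) * ((N+Np+y).choose (Np-1) : ℚ)) * hcq
  rw [Nat.cast_sum, Finset.sum_congr rfl key, Finset.sum_range_sub s M]
  have hs0 : s 0 = 0 := by simp [hs]
  rw [hs0, sub_zero]
  simp only [hs]
  rw [show M+N+Np-M = N+Np from by omega, show M+N+Np-1-M = N+Np-1 from by omega]
  have f3 : ((M:ℚ)+Mp) * ((Mp-1+M).choose M : ℚ) = (Mp:ℚ) * ((M+Mp).choose M : ℚ) := by
    exact_mod_cast congrArg (Nat.cast : ℕ → ℚ) (gz_F3 M Mp hMp)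
  have f4 : ((N:ℚ)+Np) * ((N+Np-1).choose (Np-1) : ℚ) = (Np:ℚ) * ((N+Np).choose N : ℚ) := by
    exact_mod_cast congrArg (Nat.cast : ℕ → ℚ) (gz_F4 N Np hN hNp)
  have hD2 : ((M:ℚ)+Mp) ≠ 0 := by
    have h1 : (1:ℚ) ≤ (M:ℚ) := by exact_mod_cast hM
    have h2 : (0:ℚ) ≤ (Mp:ℚ) := by positivity
    intro h; linarith
  have hfin : ((M:ℚ)*((N:ℚ)+Np)*((Mp-1+M).choose M : ℚ)*((N+Np-1).choose (Np-1) : ℚ))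
      * ((M:ℚ)+Mp) = (M:ℚ)*Mp*Np*((M+Mp).choose M : ℚ)*((N+Np).choose N : ℚ) := by
    linear_combination ((M:ℚ)*((N:ℚ)+Np)*((N+Np-1).choose (Np-1) : ℚ)) * f3
      + ((M:ℚ)*(Mp:ℚ)*((M+Mp).choose M : ℚ)) * f4
  push_cast
  field_simp
  linear_combination (((N:ℚ)+Np)*((N+Np-1).choose (Np-1) : ℚ)) * f3
    + ((Mp:ℚ)*((M+Mp).choose M : ℚ)) * f4
  

theorem guo_zeng_corollary1 (m n p q : ℕ) (hm : 0 < m) (hn : 0 < n)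
    (hp : 0 < p) (hq : 0 < q) :
    ∑ a ∈ Finset.Icc 1 (p * m), ∑ b ∈ Finset.Icc 1 (q * n),
      ((Nat.choose (p * m + q * m - a + b - 1) (p * m - a) : ℚ) *
        (Nat.choose (p * n + q * n + a - b - 1) (q * n - b) : ℚ)) =
    (p * q * m * n : ℚ) / ((p + q) * (m + n)) *
      (Nat.choose (p * m + q * m) (p * m) : ℚ) *
      (Nat.choose (p * n + q * n) (p * n) : ℚ) := by
  have hM : 1 ≤ p*m := Nat.one_le_iff_ne_zero.mpr (by positivity)
  have hN : 1 ≤ p*n := Nat.one_le_iff_ne_zero.mpr (by positivity)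
  have hMp : 1 ≤ q*m := Nat.one_le_iff_ne_zero.mpr (by positivity)
  have hNp : 1 ≤ q*n := Nat.one_le_iff_ne_zero.mpr (by positivity)
  have hcast : ∑ a ∈ Finset.Icc 1 (p * m), ∑ b ∈ Finset.Icc 1 (q * n),
      ((Nat.choose (p * m + q * m - a + b - 1) (p * m - a) : ℚ) *
        (Nat.choose (p * n + q * n + a - b - 1) (q * n - b) : ℚ))
      = ((∑ a ∈ Finset.Icc 1 (p*m), ∑ b ∈ Finset.Icc 1 (q*n),
        Nat.choose (p*m + q*m - a + b - 1) (p*m - a) *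
          Nat.choose (p*n + q*n + a - b - 1) (q*n - b) : ℕ) : ℚ) := by
    push_cast
    rfl
  rw [hcast, gz_main (p*m) (p*n) (q*m) (q*n) hM hMp hNp,
    gz_q (p*m) (p*n) (q*m) (q*n) hM hN hMp hNp (by ring)]
  have hp0 : (0:ℚ) < p := by exact_mod_cast hp
  have hq0 : (0:ℚ) < q := by exact_mod_cast hq
  have hm0 : (0:ℚ) < m := by exact_mod_cast hm
  have hn0 : (0:ℚ) < n := by exact_mod_cast hn
  have e1 : ((q:ℚ)*m + (q:ℚ)*n) ≠ 0 := ne_of_gt (by nlinarith)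
  have e2 : ((p:ℚ)*m + (q:ℚ)*m) ≠ 0 := ne_of_gt (by nlinarith)
  have e3 : ((p:ℚ)+q) ≠ 0 := ne_of_gt (by nlinarith)
  have e4 : ((m:ℚ)+n) ≠ 0 := ne_of_gt (by nlinarith)
  push_cast
  field_simp
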